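/- Let H be a complex Hilbert space with norm ‖·‖ and inner product ⟨·,·⟩, and let v₁, v₂ ∈ H be nonzero vectors (not necessarily distinct) with ‖v₁‖ = ‖v₂‖. Let J = {x ∈ H : |⟨x,v₁⟩| ≥ 1 and |⟨x,v₂⟩| ≥ 1}. Then the infimum of ‖x‖ over x ∈ J is attained and equals (2/(‖v₁‖² + |⟨v₁,v₂⟩|))^{1/2}. Moreover, if ⟨v₁,v₂⟩ ≠ 0 and we write ⟨v₁,v₂⟩ = e^{−iα}|⟨v₁,v₂⟩|, then every minimizer has the form y = (2/(‖v₁‖² + |⟨v₁,v₂⟩|))^{1/2}·c·(e^{iα}v₁ + v₂)/‖e^{iα}v₁ + v₂‖ with |c| = 1. -/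

import Mathlib

open scoped InnerProductSpace

lemma aux_unit (z : ℂ) (hz : z ≠ 0) : ‖z / (‖z‖ : ℂ)‖ = 1 := by
  simp [norm_div, hz]

lemma aux_key (z : ℂ) (hz : z ≠ 0) : starRingEnd ℂ (z / (‖z‖ : ℂ)) * z = (‖z‖ : ℂ) := by
  rw [map_div₀, Complex.conj_ofReal, div_mul_eq_mul_div, mul_comm, Complex.mul_conj']
  have h : (‖z‖ : ℂ) ≠ 0 := by
    simpa using norm_ne_zero_iff.mpr hz
  rw [sq, mul_div_assoc, div_self h, mul_one]

lemma aux_norm_sq {H : Type*} [NormedAddCommGroup H] [InnerProductSpace ℂ H]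
    (v₁ v₂ : H) (hnorm : ‖v₁‖ = ‖v₂‖) (c₁ c₂ : ℂ) (h1 : ‖c₁‖ = 1) (h2 : ‖c₂‖ = 1) :
    ‖c₁ • v₁ + c₂ • v₂‖ ^ 2
      = 2 * ‖v₁‖ ^ 2 + 2 * (starRingEnd ℂ c₁ * c₂ * starRingEnd ℂ ⟪v₂, v₁⟫_ℂ).re := by
  rw [@norm_add_sq ℂ]
  rw [inner_smul_left, inner_smul_right, ← inner_conj_symm v₁ v₂]
  simp [norm_smul, h1, h2, ← hnorm]
  ring

lemma aux_w {H : Type*} [NormedAddCommGroup H] [InnerProductSpace ℂ H]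
    (v₁ v₂ : H) (hnorm : ‖v₁‖ = ‖v₂‖) (φ : ℂ) (hφ1 : ‖φ‖ = 1)
    (hφ2 : starRingEnd ℂ ⟪v₂, v₁⟫_ℂ = φ * (‖⟪v₂, v₁⟫_ℂ‖ : ℂ)) :
    ⟪v₁, φ • v₁ + v₂⟫_ℂ = φ * ((‖v₁‖ ^ 2 + ‖⟪v₂, v₁⟫_ℂ‖ : ℝ) : ℂ) ∧
    ⟪v₂, φ • v₁ + v₂⟫_ℂ = ((‖v₁‖ ^ 2 + ‖⟪v₂, v₁⟫_ℂ‖ : ℝ) : ℂ) ∧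
    ‖φ • v₁ + v₂‖ ^ 2 = 2 * (‖v₁‖ ^ 2 + ‖⟪v₂, v₁⟫_ℂ‖) := by
  have hconjφ : starRingEnd ℂ φ * φ = 1 := by
    rw [← Complex.normSq_eq_conj_mul_self]
    simp [Complex.normSq_eq_norm_sq, hφ1]
  have ht : ⟪v₂, v₁⟫_ℂ = starRingEnd ℂ φ * (‖⟪v₂, v₁⟫_ℂ‖ : ℂ) := by
    have h := congrArg (starRingEnd ℂ) hφ2
    simp only [map_mul, Complex.conj_conj, Complex.conj_ofReal] at h
    exact h
  have hφt : φ * ⟪v₂, v₁⟫_ℂ = (‖⟪v₂, v₁⟫_ℂ‖ : ℂ) := by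
    conv_lhs => rw [ht]
    rw [← mul_assoc, mul_comm φ, hconjφ, one_mul]
  refine ⟨?_, ?_, ?_⟩
  · rw [inner_add_right, inner_smul_right, inner_self_eq_norm_sq_to_K,
      ← inner_conj_symm v₁ v₂, hφ2]
    simp only [show ∀ x : ℝ, (RCLike.ofReal x : ℂ) = Complex.ofReal x from fun _ => rfl]
    push_cast
    ring
  · rw [inner_add_right, inner_smul_right, inner_self_eq_norm_sq_to_K, hφt, ← hnorm]
    simp only [show ∀ x : ℝ, (RCLike.ofReal x : ℂ) = Complex.ofReal x from fun _ => rfl]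
    push_cast
    ring
  · have h := aux_norm_sq v₁ v₂ hnorm φ 1 hφ1 (by simp)
    simp only [one_smul] at h
    rw [h, hφ2]
    have h2 : starRingEnd ℂ φ * 1 * (φ * (‖⟪v₂, v₁⟫_ℂ‖ : ℂ)) = (‖⟪v₂, v₁⟫_ℂ‖ : ℂ) := by
      rw [mul_one, ← mul_assoc, hconjφ, one_mul]
    rw [h2, Complex.ofReal_re]
    ring

lemma aux_main {H : Type*} [NormedAddCommGroup H] [InnerProductSpace ℂ H]
    (v₁ v₂ x : H) (hnorm : ‖v₁‖ = ‖v₂‖) (a b : ℂ)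
    (haeq : a = ⟪v₁, x⟫_ℂ) (hbeq : b = ⟪v₂, x⟫_ℂ) (ha : 1 ≤ ‖a‖) (hb : 1 ≤ ‖b‖) :
    ⟪(a / (‖a‖ : ℂ)) • v₁ + (b / (‖b‖ : ℂ)) • v₂, x⟫_ℂ = ((‖a‖ + ‖b‖ : ℝ) : ℂ) ∧
    ‖(a / (‖a‖ : ℂ)) • v₁ + (b / (‖b‖ : ℂ)) • v₂‖ ^ 2
      = 2 * ‖v₁‖ ^ 2 + 2 * (starRingEnd ℂ (a / (‖a‖ : ℂ)) * (b / (‖b‖ : ℂ)) *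
          starRingEnd ℂ ⟪v₂, v₁⟫_ℂ).re ∧
    ‖(a / (‖a‖ : ℂ)) • v₁ + (b / (‖b‖ : ℂ)) • v₂‖ ^ 2
      ≤ 2 * (‖v₁‖ ^ 2 + ‖⟪v₂, v₁⟫_ℂ‖) ∧
    ‖a‖ + ‖b‖ ≤ ‖(a / (‖a‖ : ℂ)) • v₁ + (b / (‖b‖ : ℂ)) • v₂‖ * ‖x‖ := by
  have ha0 : a ≠ 0 := by intro h; rw [h] at ha; simp at ha; linarith
  have hb0 : b ≠ 0 := by intro h; rw [h] at hb; simp at hb; linarith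
  have hda : ‖a / (‖a‖ : ℂ)‖ = 1 := aux_unit a ha0
  have hdb : ‖b / (‖b‖ : ℂ)‖ = 1 := aux_unit b hb0
  have C1 : ⟪(a / (‖a‖ : ℂ)) • v₁ + (b / (‖b‖ : ℂ)) • v₂, x⟫_ℂ = ((‖a‖ + ‖b‖ : ℝ) : ℂ) := by
    rw [inner_add_left, inner_smul_left, inner_smul_left, ← haeq, ← hbeq,
      aux_key a ha0, aux_key b hb0]
    push_cast
    ring
  have C2 := aux_norm_sq v₁ v₂ hnorm _ _ hda hdb
  refine ⟨C1, C2, ?_, ?_⟩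
  · rw [C2]
    have hre : (starRingEnd ℂ (a / (‖a‖ : ℂ)) * (b / (‖b‖ : ℂ)) *
        starRingEnd ℂ ⟪v₂, v₁⟫_ℂ).re ≤ ‖⟪v₂, v₁⟫_ℂ‖ := by
      refine le_trans (Complex.re_le_norm _) ?_
      calc ‖starRingEnd ℂ (a / (‖a‖ : ℂ)) * (b / (‖b‖ : ℂ)) * starRingEnd ℂ ⟪v₂, v₁⟫_ℂ‖
          = ‖a / (‖a‖ : ℂ)‖ * ‖b / (‖b‖ : ℂ)‖ * ‖⟪v₂, v₁⟫_ℂ‖ := by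
            simp only [norm_mul, RCLike.norm_conj]
        _ = ‖⟪v₂, v₁⟫_ℂ‖ := by rw [hda, hdb]; ring
        _ ≤ ‖⟪v₂, v₁⟫_ℂ‖ := le_refl _
    linarith
  · have := norm_inner_le_norm (𝕜 := ℂ) ((a / (‖a‖ : ℂ)) • v₁ + (b / (‖b‖ : ℂ)) • v₂) x
    rw [C1] at this
    rw [Complex.norm_real, Real.norm_of_nonneg (by positivity)] at this
    exact this

set_option maxHeartbeats 1000000 in
/-- The geometric lemma on minimal norm vectors with two inner product constraints.
Here the paper's inner product `⟨x,y⟩` (linear in the first variable, conjugate-linear in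
the second) corresponds to Mathlib's `⟪y, x⟫_ℂ`. -/
theorem hilbert_two_constraint_min
    {H : Type*} [NormedAddCommGroup H] [InnerProductSpace ℂ H] [CompleteSpace H]
    (v₁ v₂ : H) (hv₁ : v₁ ≠ 0) (hv₂ : v₂ ≠ 0) (hnorm : ‖v₁‖ = ‖v₂‖) :
    IsLeast ((fun x => ‖x‖) ''
        {x : H | 1 ≤ ‖⟪v₁, x⟫_ℂ‖ ∧ 1 ≤ ‖⟪v₂, x⟫_ℂ‖})
      (Real.sqrt (2 / (‖v₁‖ ^ 2 + ‖⟪v₂, v₁⟫_ℂ‖))) ∧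
    (⟪v₂, v₁⟫_ℂ ≠ 0 → ∀ α : ℝ,
      ⟪v₂, v₁⟫_ℂ = Complex.exp (-Complex.I * α) * (‖⟪v₂, v₁⟫_ℂ‖ : ℂ) →
      ∀ y : H, 1 ≤ ‖⟪v₁, y⟫_ℂ‖ → 1 ≤ ‖⟪v₂, y⟫_ℂ‖ →
        ‖y‖ = Real.sqrt (2 / (‖v₁‖ ^ 2 + ‖⟪v₂, v₁⟫_ℂ‖)) →
        ∃ c : ℂ, ‖c‖ = 1 ∧
          y = (((Real.sqrt (2 / (‖v₁‖ ^ 2 + ‖⟪v₂, v₁⟫_ℂ‖)) /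
              ‖Complex.exp (Complex.I * α) • v₁ + v₂‖ : ℝ) : ℂ) * c) •
            (Complex.exp (Complex.I * α) • v₁ + v₂)) := by
  set t : ℂ := ⟪v₂, v₁⟫_ℂ with htdef
  set m : ℝ := ‖t‖ with hmdef
  set S : ℝ := ‖v₁‖ ^ 2 + m with hSdef
  have hm0 : 0 ≤ m := norm_nonneg _
  have hS : 0 < S := by
    have h1 : 0 < ‖v₁‖ ^ 2 := pow_pos (norm_pos_iff.mpr hv₁) 2
    rw [hSdef]
    exact add_pos_of_pos_of_nonneg h1 hm0
  have hsqrt_eq : Real.sqrt (2 * S) / S = Real.sqrt (2 / S) := by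
    rw [show (2 : ℝ) / S = (2 * S) / S ^ 2 by field_simp, Real.sqrt_div (by positivity),
      Real.sqrt_sq hS.le]
  constructor
  · constructor
    · -- membership: exhibit the minimizer
      set φ : ℂ := if t = 0 then 1 else starRingEnd ℂ t / (m : ℂ) with hφdef
      have hφ1 : ‖φ‖ = 1 := by
        rw [hφdef]
        split_ifs with h
        · simp
        · have hm' : m ≠ 0 := by rw [hmdef]; simpa using h
          rw [norm_div, RCLike.norm_conj, Complex.norm_real, Real.norm_of_nonneg hm0,
            ← hmdef, div_self hm']
      have hφ2 : starRingEnd ℂ t = φ * (m : ℂ) := by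
        rw [hφdef]
        split_ifs with h
        · rw [h, hmdef, h]
          simp
        · have hm' : (m : ℂ) ≠ 0 := by
            rw [hmdef]
            simpa using h
          field_simp
      obtain ⟨W1, W2, W3⟩ := aux_w v₁ v₂ hnorm φ hφ1 hφ2
      rw [← htdef, ← hmdef, ← hSdef] at W1 W2 W3
      set w : H := φ • v₁ + v₂ with hwdef
      have hwnorm : ‖w‖ = Real.sqrt (2 * S) := by
        rw [← Real.sqrt_sq (norm_nonneg w), W3]
      refine ⟨((S⁻¹ : ℝ) : ℂ) • w, ⟨?_, ?_⟩, ?_⟩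
      · rw [inner_smul_right, W1, norm_mul, norm_mul, hφ1, Complex.norm_real,
          Complex.norm_real, Real.norm_of_nonneg (inv_nonneg.mpr hS.le),
          Real.norm_of_nonneg hS.le, one_mul, inv_mul_cancel₀ hS.ne']
      · rw [inner_smul_right, W2, norm_mul, Complex.norm_real, Complex.norm_real,
          Real.norm_of_nonneg (inv_nonneg.mpr hS.le), Real.norm_of_nonneg hS.le,
          inv_mul_cancel₀ hS.ne']
      · show ‖((S⁻¹ : ℝ) : ℂ) • w‖ = _
        rw [norm_smul, Complex.norm_real, Real.norm_of_nonneg (inv_nonneg.mpr hS.le),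
          hwnorm, ← hsqrt_eq, inv_mul_eq_div]
    · -- lower bound
      rintro z ⟨x, ⟨hx1, hx2⟩, rfl⟩
      obtain ⟨C1, C2, C3, C4⟩ := aux_main v₁ v₂ x hnorm _ _ rfl rfl hx1 hx2
      rw [← htdef, ← hmdef] at C3
      set u : H := (⟪v₁, x⟫_ℂ / (‖⟪v₁, x⟫_ℂ‖ : ℂ)) • v₁ +
        (⟪v₂, x⟫_ℂ / (‖⟪v₂, x⟫_ℂ‖ : ℂ)) • v₂ with hudef
      have C3' : ‖u‖ ^ 2 ≤ 2 * S := by rw [hSdef]; linarith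
      have h2 : 2 ≤ ‖u‖ * ‖x‖ := le_trans (by linarith) C4
      have h4 : 4 ≤ ‖u‖ ^ 2 * ‖x‖ ^ 2 := by nlinarith [norm_nonneg u, norm_nonneg x]
      have h5 : 2 / S ≤ ‖x‖ ^ 2 := by
        rw [div_le_iff₀ hS]
        nlinarith [mul_le_mul_of_nonneg_right C3' (sq_nonneg ‖x‖)]
      calc Real.sqrt (2 / S) ≤ Real.sqrt (‖x‖ ^ 2) := Real.sqrt_le_sqrt h5
        _ = ‖x‖ := Real.sqrt_sq (norm_nonneg x)
  · -- uniqueness of minimizers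
    intro htne α hα y hy1 hy2 hynorm
    have hmne : m ≠ 0 := by rw [hmdef]; simpa using htne
    have hmpos : 0 < m := lt_of_le_of_ne hm0 (Ne.symm hmne)
    set φ : ℂ := Complex.exp (Complex.I * α) with hφdef
    have hφ1 : ‖φ‖ = 1 := by
      rw [hφdef, Complex.norm_exp]
      simp
    have hφ2 : starRingEnd ℂ t = φ * (m : ℂ) := by
      rw [hα, map_mul, Complex.conj_ofReal, ← Complex.exp_conj]
      congr 1
      simp [map_mul, hφdef]
    obtain ⟨W1, W2, W3⟩ := aux_w v₁ v₂ hnorm φ hφ1 hφ2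
    rw [← htdef, ← hmdef, ← hSdef] at W1 W2 W3
    set w : H := φ • v₁ + v₂ with hwdef
    have hwnorm : ‖w‖ = Real.sqrt (2 * S) := by
      rw [← Real.sqrt_sq (norm_nonneg w), W3]
    have hwpos : 0 < ‖w‖ := by rw [hwnorm]; positivity
    obtain ⟨C1, C2, C3, C4⟩ := aux_main v₁ v₂ y hnorm _ _ rfl rfl hy1 hy2
    rw [← htdef] at C2
    rw [← htdef, ← hmdef] at C3
    set a : ℂ := ⟪v₁, y⟫_ℂ with hadef
    set b : ℂ := ⟪v₂, y⟫_ℂ with hbdef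
    set u : H := (a / (‖a‖ : ℂ)) • v₁ + (b / (‖b‖ : ℂ)) • v₂ with hudef
    have C3' : ‖u‖ ^ 2 ≤ 2 * S := by rw [hSdef]; linarith
    have hy2pos : 0 < Real.sqrt (2 / S) := by positivity
    have hySq : ‖y‖ ^ 2 = 2 / S := by
      rw [hynorm, Real.sq_sqrt (by positivity)]
    have huS : ‖u‖ ≤ Real.sqrt (2 * S) := by
      rw [← Real.sqrt_sq (norm_nonneg u)]
      exact Real.sqrt_le_sqrt C3'
    have hprod : Real.sqrt (2 * S) * Real.sqrt (2 / S) = 2 := by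
      rw [← Real.sqrt_mul (by positivity)]
      rw [show 2 * S * (2 / S) = 4 by field_simp; ring]
      rw [show (4 : ℝ) = 2 ^ 2 by norm_num, Real.sqrt_sq (by norm_num)]
    have hab2 : ‖a‖ + ‖b‖ ≤ 2 := by
      calc ‖a‖ + ‖b‖ ≤ ‖u‖ * ‖y‖ := C4
        _ ≤ Real.sqrt (2 * S) * Real.sqrt (2 / S) := by
            rw [hynorm]
            exact mul_le_mul_of_nonneg_right huS (Real.sqrt_nonneg _)
        _ = 2 := hprod
    have hna : ‖a‖ = 1 := by linarith
    have hnb : ‖b‖ = 1 := by linarith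
    have hda : a / (‖a‖ : ℂ) = a := by rw [hna]; simp
    have hdb : b / (‖b‖ : ℂ) = b := by rw [hnb]; simp
    rw [hda, hdb] at C2 hudef
    -- ‖u‖² = 2S
    have h2u : 2 ≤ ‖u‖ * ‖y‖ := by rw [hna, hnb] at C4; linarith
    have h4 : 4 ≤ ‖u‖ ^ 2 * ‖y‖ ^ 2 := by nlinarith [norm_nonneg u, norm_nonneg y]
    have hu2 : ‖u‖ ^ 2 = 2 * S := by
      rw [hySq] at h4
      have h4' : 4 * S ≤ ‖u‖ ^ 2 * 2 := by
        have h := mul_le_mul_of_nonneg_right h4 hS.le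
        rw [mul_assoc, div_mul_cancel₀ _ hS.ne'] at h
        linarith
      linarith
    -- deduce conj a * b * conj t = m
    have hre : (starRingEnd ℂ a * b * starRingEnd ℂ t).re = m := by
      rw [hu2] at C2
      have hSdef' : S = ‖v₁‖ ^ 2 + m := hSdef
      linarith
    have habs : ‖starRingEnd ℂ a * b * starRingEnd ℂ t‖ = m := by
      rw [norm_mul, norm_mul, RCLike.norm_conj, RCLike.norm_conj, hna, hnb, ← hmdef]
      ring
    have him : (starRingEnd ℂ a * b * starRingEnd ℂ t).im = 0 := by
      have h := Complex.sq_norm (starRingEnd ℂ a * b * starRingEnd ℂ t)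
      rw [habs, Complex.normSq_apply, hre] at h
      have h3 : m ^ 2 = m * m := sq m
      have h2 : (starRingEnd ℂ a * b * starRingEnd ℂ t).im *
          (starRingEnd ℂ a * b * starRingEnd ℂ t).im = 0 := by linarith
      exact mul_self_eq_zero.mp h2
    have hz : starRingEnd ℂ a * b * starRingEnd ℂ t = (m : ℂ) := by
      apply Complex.ext
      · rw [hre]; simp
      · rw [him]; simp
    -- deduce b * φ = a
    have haa : a * starRingEnd ℂ a = 1 := by
      rw [Complex.mul_conj', hna]
      norm_num
    have hmC : (m : ℂ) ≠ 0 := by exact_mod_cast hmne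
    have h1 : starRingEnd ℂ a * b * φ = 1 := by
      rw [hφ2] at hz
      apply mul_right_cancel₀ hmC
      calc starRingEnd ℂ a * b * φ * (m : ℂ)
          = starRingEnd ℂ a * b * (φ * (m : ℂ)) := by ring
        _ = (m : ℂ) := hz
        _ = 1 * (m : ℂ) := (one_mul _).symm
    have hab : b * φ = a := by
      calc b * φ = (a * starRingEnd ℂ a) * (b * φ) := by rw [haa, one_mul]
        _ = a * (starRingEnd ℂ a * b * φ) := by ring
        _ = a := by rw [h1, mul_one]
    have hubw : u = b • w := by
      rw [hudef, hwdef, smul_add, smul_smul, hab]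
    -- Cauchy-Schwarz equality
    have hCS : ‖⟪u, y⟫_ℂ‖ = ‖u‖ * ‖y‖ := by
      rw [C1, Complex.norm_real, Real.norm_of_nonneg (by positivity), hna, hnb]
      rw [hynorm, ← Real.sqrt_sq (norm_nonneg u), hu2, hprod]
      norm_num
    have hu0 : u ≠ 0 := by
      intro h
      rw [h, norm_zero] at hu2
      nlinarith [hS]
    have hy0 : y ≠ 0 := by
      intro h
      rw [h, norm_zero] at hynorm
      nlinarith [hy2pos]
    obtain ⟨r, hr0, hry⟩ := (norm_inner_eq_norm_iff hu0 hy0).1 hCS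
    have hyrw : y = (r * b) • w := by
      rw [hry, hubw, smul_smul]
    have hrbnorm : ‖r * b‖ = Real.sqrt (2 / S) / ‖w‖ := by
      rw [eq_div_iff hwpos.ne']
      rw [hyrw, norm_smul] at hynorm
      exact hynorm
    refine ⟨r * b * (‖w‖ : ℂ) / ((Real.sqrt (2 / S) : ℝ) : ℂ), ?_, ?_⟩
    · rw [norm_div, norm_mul, hrbnorm, Complex.norm_real, Complex.norm_real,
        Real.norm_of_nonneg hwpos.le, Real.norm_of_nonneg hy2pos.le]
      field_simp
    · rw [hyrw]
      congr 1
      have hLne : ((Real.sqrt (2 / S) : ℝ) : ℂ) ≠ 0 := by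
        simpa using hy2pos.ne'
      have hwne : ((‖w‖ : ℝ) : ℂ) ≠ 0 := by
        simpa using hwpos.ne'
      push_cast
      have h2c : ((Real.sqrt 2 : ℝ) : ℂ) ≠ 0 := by
        simpa using (Real.sqrt_pos.mpr (by norm_num : (0:ℝ) < 2)).ne'
      have hSc : ((Real.sqrt (‖v₁‖ ^ 2 + m) : ℝ) : ℂ) ≠ 0 := by
        have hp : 0 < Real.sqrt (‖v₁‖ ^ 2 + m) := by
          rw [← hSdef]
          exact Real.sqrt_pos.mpr hS
        simpa using hp.ne'
      field_simp
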